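/- Let G = (V, E) be a graph with |V| = n, and let G' be obtained from G by adding a set V_a of k·n² new vertices, each adjacent to every vertex of V (and to no vertex of V_a). Let dist be the shortest-path metric of G'. If G has a dominating set of size k, then there exist k vertices v₁, …, v_k ∈ V such that every vertex of V ∪ V_a is within distance 1 of some v_i, and the vertices of V ∪ V_a can be partitioned into k parts P₁, …, P_k with P_i ⊆ B(v_i, 1) and |P_i| ≤ n² + n for each i. -/

import Mathlib

/-- The join of a graph `G` with a set `A` of new universal vertices: vertices of `V` keep
their adjacencies, every vertex of `A` is adjacent to every vertex of `V`, and no two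
vertices of `A` are adjacent. -/
def joinGraph {V : Type*} (A : Type*) (G : SimpleGraph V) : SimpleGraph (V ⊕ A) where
  Adj x y :=
    match x, y with
    | Sum.inl u, Sum.inl v => G.Adj u v
    | Sum.inl _, Sum.inr _ => True
    | Sum.inr _, Sum.inl _ => True
    | Sum.inr _, Sum.inr _ => False
  symm := by
    constructor
    rintro (u | a) (v | b) h
    · exact G.adj_symm h
    · trivial
    · trivial
    · exact h.elim
  loopless := by
    constructor
    rintro (u | a) h
    · exact G.loopless.irrefl u h
    · exact h.elim

/-- If `G` has a dominating set of size `k`, then in the augmented graph `G'` (with `k·n²`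
universal vertices added) there are `k` centers in `V` whose radius-1 balls cover everything,
together with a partition into parts of size at most `n² + n` each contained in the
corresponding ball. -/
theorem stmt5 {V : Type*} [Fintype V] [DecidableEq V] (G : SimpleGraph V)
    (n k : ℕ) (hn : Fintype.card V = n) (hk : 1 ≤ k)
    (D : Finset V) (hD : D.card = k)
    (hdom : ∀ v : V, ∃ u ∈ D, u = v ∨ G.Adj u v) :
    ∃ (v : Fin k → V) (P : Fin k → Finset (V ⊕ Fin (k * n ^ 2))),
      (∀ x : V ⊕ Fin (k * n ^ 2), ∃ i, (joinGraph (Fin (k * n ^ 2)) G).dist (Sum.inl (v i)) x ≤ 1) ∧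
      (∀ x : V ⊕ Fin (k * n ^ 2), ∃ i, x ∈ P i) ∧
      (∀ i j, i ≠ j → Disjoint (P i) (P j)) ∧
      (∀ i, ∀ x ∈ P i, (joinGraph (Fin (k * n ^ 2)) G).dist (Sum.inl (v i)) x ≤ 1) ∧
      (∀ i, (P i).card ≤ n ^ 2 + n) := by
  classical
  set G' := joinGraph (Fin (k * n ^ 2)) G with hG'
  -- enumerate D
  let e : Fin k → V := fun i => (D.equivFin.symm (Fin.cast hD.symm i) : V)
  have he : ∀ u ∈ D, ∃ i, e i = u := by
    intro u hu
    exact ⟨Fin.cast hD (D.equivFin ⟨u, hu⟩), by simp [e]⟩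
  have hidx : ∀ x : V, ∃ i : Fin k, e i = x ∨ G.Adj (e i) x := by
    intro x
    obtain ⟨u, hu, h⟩ := hdom x
    obtain ⟨i, hi⟩ := he u hu
    exact ⟨i, hi ▸ h⟩
  choose idx hidxp using hidx
  have hdist1 : ∀ (i : Fin k) (x : V), e i = x ∨ G.Adj (e i) x →
      G'.dist (Sum.inl (e i)) (Sum.inl x) ≤ 1 := by
    intro i x h
    rcases h with h | h
    · subst h; rw [SimpleGraph.dist_self]; exact Nat.zero_le 1
    · have hadj : G'.Adj (Sum.inl (e i)) (Sum.inl x) := h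
      calc G'.dist _ _ ≤ (SimpleGraph.Walk.cons hadj SimpleGraph.Walk.nil).length :=
            SimpleGraph.dist_le _
        _ = 1 := by simp
  have hdistA : ∀ (i : Fin k) (a : Fin (k * n ^ 2)),
      G'.dist (Sum.inl (e i)) (Sum.inr a) ≤ 1 := by
    intro i a
    have hadj : G'.Adj (Sum.inl (e i)) (Sum.inr a) := trivial
    calc G'.dist _ _ ≤ (SimpleGraph.Walk.cons hadj SimpleGraph.Walk.nil).length :=
          SimpleGraph.dist_le _
      _ = 1 := by simp
  have hn2 : 0 < n ^ 2 ∨ k * n ^ 2 = 0 := by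
    rcases Nat.eq_zero_or_pos (n ^ 2) with h | h
    · right; simp [h]
    · left; exact h
  let g : Fin (k * n ^ 2) → Fin k := fun a =>
    ⟨a.val / n ^ 2, by
      rcases hn2 with h | h
      · exact (Nat.div_lt_iff_lt_mul h).mpr (by
          have := a.isLt; omega)
      · exact ((Nat.not_lt_zero a.val) (by have := a.isLt; omega)).elim⟩
  let P : Fin k → Finset (V ⊕ Fin (k * n ^ 2)) := fun i =>
    ((Finset.univ.filter fun x : V => idx x = i).image Sum.inl) ∪
    ((Finset.univ.filter fun a => g a = i).image Sum.inr)
  have hmemP : ∀ y : V ⊕ Fin (k * n ^ 2), ∀ i, y ∈ P i ↔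
      (∃ x : V, idx x = i ∧ y = Sum.inl x) ∨ (∃ a, g a = i ∧ y = Sum.inr a) := by
    intro y i
    simp only [P, Finset.mem_union, Finset.mem_image, Finset.mem_filter, Finset.mem_univ,
      true_and]
    constructor
    · rintro (⟨x, hx, h⟩ | ⟨a, ha, h⟩)
      · exact Or.inl ⟨x, hx, h.symm⟩
      · exact Or.inr ⟨a, ha, h.symm⟩
    · rintro (⟨x, hx, h⟩ | ⟨a, ha, h⟩)
      · exact Or.inl ⟨x, hx, h.symm⟩
      · exact Or.inr ⟨a, ha, h.symm⟩
  refine ⟨e, P, ?_, ?_, ?_, ?_, ?_⟩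
  · rintro (x | a)
    · exact ⟨idx x, hdist1 _ _ (hidxp x)⟩
    · exact ⟨⟨0, by omega⟩, hdistA _ _⟩
  · rintro (x | a)
    · exact ⟨idx x, (hmemP _ _).mpr (Or.inl ⟨x, rfl, rfl⟩)⟩
    · exact ⟨g a, (hmemP _ _).mpr (Or.inr ⟨a, rfl, rfl⟩)⟩
  · intro i j hij
    rw [Finset.disjoint_left]
    intro y hyi hyj
    rcases (hmemP y i).mp hyi with ⟨x, hx, rfl⟩ | ⟨a, ha, rfl⟩
    · rcases (hmemP _ j).mp hyj with ⟨x', hx', hx''⟩ | ⟨a', _, h⟩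
      · have hxx : x = x' := Sum.inl_injective hx''
        exact hij (by rw [← hx, ← hx', hxx])
      · exact (Sum.inl_ne_inr h).elim
    · rcases (hmemP _ j).mp hyj with ⟨x', _, h⟩ | ⟨a', ha', h⟩
      · exact (Sum.inr_ne_inl h).elim
      · have haa : a = a' := Sum.inr_injective h
        exact hij (by rw [← ha, ← ha', haa])
  · intro i y hy
    rcases (hmemP y i).mp hy with ⟨x, hx, rfl⟩ | ⟨a, _, rfl⟩
    · exact hx ▸ hdist1 _ _ (hidxp x)
    · exact hdistA _ _
  · intro i
    have h1 : ((Finset.univ.filter fun x : V => idx x = i).image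
        (Sum.inl : V → V ⊕ Fin (k * n ^ 2))).card ≤ n := by
      calc _ ≤ (Finset.univ.filter fun x : V => idx x = i).card :=
            Finset.card_image_le
        _ ≤ Finset.univ.card := Finset.card_filter_le _ _
        _ = n := by rw [Finset.card_univ, hn]
    have h2 : ((Finset.univ.filter fun a : Fin (k * n ^ 2) => g a = i).image
        (Sum.inr : Fin (k * n ^ 2) → V ⊕ Fin (k * n ^ 2))).card ≤ n ^ 2 := by
      have : ((Finset.univ.filter fun a : Fin (k * n ^ 2) => g a = i)).card ≤ n ^ 2 := by
        have := Finset.card_le_card_of_injOn (f := fun a : Fin (k * n ^ 2) => a.val % n ^ 2)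
          (s := Finset.univ.filter fun a => g a = i) (t := Finset.range (n ^ 2))
          (by
            intro a ha
            rcases hn2 with h | h
            · exact Finset.mem_range.mpr (Nat.mod_lt _ h)
            · exact ((Nat.not_lt_zero a.val) (by have := a.isLt; omega)).elim)
          (by
            intro a ha b hb hab
            simp only [Finset.mem_coe, Finset.mem_filter, Finset.mem_univ, true_and] at ha hb
            have hga : a.val / n ^ 2 = i.val := congrArg Fin.val ha
            have hgb : b.val / n ^ 2 = i.val := congrArg Fin.val hb
            have hab' : a.val % n ^ 2 = b.val % n ^ 2 := hab
            refine Fin.val_injective ?_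
            conv_lhs => rw [← Nat.div_add_mod a.val (n ^ 2)]
            conv_rhs => rw [← Nat.div_add_mod b.val (n ^ 2)]
            rw [hga, hgb, hab'])
        simpa using this
      calc _ ≤ _ := Finset.card_image_le
        _ ≤ n ^ 2 := this
    calc (P i).card ≤ _ + _ := Finset.card_union_le _ _
      _ ≤ n + n ^ 2 := Nat.add_le_add h1 h2
      _ = n ^ 2 + n := Nat.add_comm _ _
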